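/- arXiv:1801.00450 — 2 statements merged into one kernel-verified Lean document; each statement's English description precedes it below -/
import Mathlib

section
/- Let A be a constant M×M matrix and let Ũ*(ξ,t) = U* + t(ξI − A)g* and F̃*(ξ,t) = F* + tA(ξI − A)g*, with analogous expansions Ũ_R, F̃_R built from U_R, F(U_R), A_R = A(U_R), g_R. If F* − F(U_R) = S_R(U* − U_R) (the zeroth-order RH condition) and the shock trajectory is x_R(t) = S_R t + ½ S_R′ t², then the generalized Rankine–Hugoniot condition F̃*(S_R,t) − F̃_R(S_R,t) = (dx_R/dt)(Ũ*(S_R,t) − Ũ_R(S_R,t)) holds to first order in t if and only if (S_R I − A)² g* + S_R′(U* − U_R) = (S_R I − A_R)² g_R. -/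
/-- The generalized Rankine–Hugoniot condition at the right extremal wave
holds to first order in `t` (i.e. up to an `O(t²)` remainder with constant coefficient)
iff `(S_R I − A)² g* + S_R′ (U* − U_R) = (S_R I − A_R)² g_R`. -/
theorem stmt4 (M : ℕ) (A AR : Matrix (Fin M) (Fin M) ℝ)
    (Ustar UR Fstar FR gstar gR : Fin M → ℝ) (SR SR' : ℝ)
    (Ut Ft UtR FtR : ℝ → ℝ → (Fin M → ℝ)) (xR : ℝ → ℝ)
    (hUt : ∀ ξ t, Ut ξ t = Ustar +
      t • ((ξ • (1 : Matrix (Fin M) (Fin M) ℝ) - A).mulVec gstar))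
    (hFt : ∀ ξ t, Ft ξ t = Fstar +
      t • (A.mulVec ((ξ • (1 : Matrix (Fin M) (Fin M) ℝ) - A).mulVec gstar)))
    (hUtR : ∀ ξ t, UtR ξ t = UR +
      t • ((ξ • (1 : Matrix (Fin M) (Fin M) ℝ) - AR).mulVec gR))
    (hFtR : ∀ ξ t, FtR ξ t = FR +
      t • (AR.mulVec ((ξ • (1 : Matrix (Fin M) (Fin M) ℝ) - AR).mulVec gR)))
    (hxR : ∀ t, xR t = SR * t + (1 / 2) * SR' * t ^ 2)
    (hRH0 : Fstar - FR = SR • (Ustar - UR)) :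
    (∃ c : Fin M → ℝ, ∀ t : ℝ,
        Ft SR t - FtR SR t
          = (deriv xR t) • (Ut SR t - UtR SR t) + (t ^ 2) • c)
      ↔ ((SR • (1 : Matrix (Fin M) (Fin M) ℝ) - A) ^ 2).mulVec gstar
          + SR' • (Ustar - UR)
        = ((SR • (1 : Matrix (Fin M) (Fin M) ℝ) - AR) ^ 2).mulVec gR := by
  have hxfun : xR = fun t : ℝ => SR * t + (1 / 2) * SR' * t ^ 2 := funext hxR
  have hderiv : ∀ t : ℝ, deriv xR t = SR + SR' * t := by
    intro t
    have h1 : HasDerivAt (fun s : ℝ => SR * s + (1 / 2) * SR' * s ^ 2)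
        (SR + SR' * t) t := by
      have := ((hasDerivAt_id t).const_mul SR).add
        ((hasDerivAt_pow 2 t).const_mul ((1 / 2) * SR'))
      refine this.congr_deriv ?_
      push_cast
      ring
    rw [hxfun]
    exact h1.deriv
  have hsq : ∀ (B : Matrix (Fin M) (Fin M) ℝ) (g : Fin M → ℝ),
      ((SR • (1 : Matrix (Fin M) (Fin M) ℝ) - B) ^ 2).mulVec g
        = SR • ((SR • (1 : Matrix (Fin M) (Fin M) ℝ) - B).mulVec g)
          - B.mulVec ((SR • (1 : Matrix (Fin M) (Fin M) ℝ) - B).mulVec g) := by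
    intro B g
    rw [sq, ← Matrix.mulVec_mulVec, Matrix.sub_mulVec, Matrix.smul_mulVec,
      Matrix.one_mulVec]
  constructor
  · rintro ⟨c, hc⟩
    have h1 := hc 1
    have h2 := hc (-1)
    simp only [hUt, hFt, hUtR, hFtR, hderiv] at h1 h2
    rw [hsq, hsq]
    funext i
    have e1 := congrFun h1 i
    have e2 := congrFun h2 i
    have e0 := congrFun hRH0 i
    simp only [Pi.add_apply, Pi.sub_apply, Pi.smul_apply, smul_eq_mul] at e1 e2 e0 ⊢
    linear_combination (e2 - e1) / 2
  · intro h
    refine ⟨(SR' • ((SR • (1 : Matrix (Fin M) (Fin M) ℝ) - AR).mulVec gR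
        - (SR • (1 : Matrix (Fin M) (Fin M) ℝ) - A).mulVec gstar)), ?_⟩
    intro t
    rw [hsq, hsq] at h
    simp only [hUt, hFt, hUtR, hFtR, hderiv]
    funext i
    have h' := congrFun h i
    have e0 := congrFun hRH0 i
    simp only [Pi.add_apply, Pi.sub_apply, Pi.smul_apply, smul_eq_mul] at h' e0 ⊢
    linear_combination e0 - t * h'
end

section
/- For the piecewise path Ū(ξ) of the HLL Riemann solver with S_L < 0 < S_R, the left fluctuation D⁻ = ∫ over ξ∈[S_L−ε, 0] of −(Ū − d(ξŪ)/dξ) dξ equals S_L(U* − U_L) + O(ε), and the right fluctuation D⁺ over ξ∈[0, S_R+ε] equals S_R(U_R − U*) + O(ε); in particular in the limit ε → 0, D⁻ = S_L(U* − U_L) and D⁺ = S_R(U_R − U*). -/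
open intervalIntegral

section Aux

open MeasureTheory Set Filter

lemma ae_ne_pt (c : ℝ) : ∀ᵐ x : ℝ, x ≠ c := by
  rw [ae_iff]
  simp [measure_singleton]

lemma ramp_integrand {M : ℕ} (U : ℝ → Fin M → ℝ) (A V : Fin M → ℝ) (c d c' ε : ℝ)
    (h : ∀ s ∈ Set.Ioo c d, U s = A + ((s - c') / ε) • V) :
    ∀ ξ ∈ Set.Ioo c d, -(U ξ - deriv (fun s => s • U s) ξ) = (ξ / ε) • V := by
  intro ξ hξ
  have hmem : Set.Ioo c d ∈ nhds ξ := isOpen_Ioo.mem_nhds hξ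
  have heq : (fun s => s • U s) =ᶠ[nhds ξ] (fun s => s • (A + ((s - c') / ε) • V)) :=
    Filter.eventuallyEq_of_mem hmem (fun s hs => by rw [h s hs])
  have h2 : HasDerivAt (fun s : ℝ => (s - c') / ε) (1 / ε) ξ := by
    simpa using ((hasDerivAt_id ξ).sub_const c').div_const ε
  have hd : HasDerivAt (fun s => s • (A + ((s - c') / ε) • V))
      (ξ • ((1 / ε) • V) + (1 : ℝ) • (A + ((ξ - c') / ε) • V)) ξ := by
    have := (hasDerivAt_id ξ).smul ((hasDerivAt_const ξ A).add (h2.smul_const V))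
    exact this.congr_deriv (by simp)
  have hder : deriv (fun s => s • U s) ξ
      = ξ • ((1 / ε) • V) + (1 : ℝ) • (A + ((ξ - c') / ε) • V) := by
    rw [heq.deriv_eq]; exact hd.deriv
  rw [hder, h ξ hξ, smul_smul, one_smul]
  rw [mul_one_div]
  abel

lemma const_integrand {M : ℕ} (U : ℝ → Fin M → ℝ) (C : Fin M → ℝ) (c d : ℝ)
    (h : ∀ s ∈ Set.Ioo c d, U s = C) :
    ∀ ξ ∈ Set.Ioo c d, -(U ξ - deriv (fun s => s • U s) ξ) = 0 := by
  intro ξ hξ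
  have hmem : Set.Ioo c d ∈ nhds ξ := isOpen_Ioo.mem_nhds hξ
  have heq : (fun s => s • U s) =ᶠ[nhds ξ] (fun s => s • C) :=
    Filter.eventuallyEq_of_mem hmem (fun s hs => by rw [h s hs])
  have hder : deriv (fun s => s • U s) ξ = C := by
    rw [heq.deriv_eq]
    simpa using ((hasDerivAt_id ξ).smul_const C).deriv
  rw [hder, h ξ hξ]
  simp

lemma integral_congr_Ioo {M : ℕ} {f g : ℝ → Fin M → ℝ} {a b : ℝ} (hab : a ≤ b)
    (h : ∀ x ∈ Set.Ioo a b, f x = g x) :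
    (∫ x in a..b, f x) = ∫ x in a..b, g x := by
  apply intervalIntegral.integral_congr_ae
  filter_upwards [ae_ne_pt b] with x hx hmem
  rw [Set.uIoc_of_le hab] at hmem
  exact h x ⟨hmem.1, lt_of_le_of_ne hmem.2 hx⟩

lemma intervalIntegrable_of_Ioo {M : ℕ} {f g : ℝ → Fin M → ℝ} {a b : ℝ} (hab : a ≤ b)
    (hg : IntervalIntegrable g MeasureTheory.volume a b)
    (h : ∀ x ∈ Set.Ioo a b, f x = g x) :
    IntervalIntegrable f MeasureTheory.volume a b := by
  apply hg.congr_ae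
  rw [Filter.EventuallyEq, MeasureTheory.ae_restrict_iff' measurableSet_uIoc]
  filter_upwards [ae_ne_pt b] with x hx hmem
  rw [Set.uIoc_of_le hab] at hmem
  exact (h x ⟨hmem.1, lt_of_le_of_ne hmem.2 hx⟩).symm

lemma ramp_int_val {M : ℕ} (V : Fin M → ℝ) (a b ε : ℝ) :
    (∫ ξ in a..b, (ξ / ε) • V) = (((b ^ 2 - a ^ 2) / 2) / ε) • V := by
  rw [intervalIntegral.integral_smul_const]
  congr 1
  rw [intervalIntegral.integral_div, integral_id]

end Aux

/-- The HLL fluctuations of the piecewise path `Ū` satisfy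
`D⁻(ε) → S_L (U* − U_L)` and `D⁺(ε) → S_R (U_R − U*)` as `ε → 0⁺` (equations
(3.10)–(3.11)), where `D∓` are the integrals of `−(Ū − d(ξ Ū)/dξ)` over
`[S_L − ε, 0]` and `[0, S_R + ε]` respectively. -/
theorem stmt9 (M : ℕ) (UL Us UR : Fin M → ℝ) (SL SR : ℝ)
    (hSL : SL < 0) (hSR : 0 < SR)
    (Ubar : ℝ → ℝ → (Fin M → ℝ))
    (hUbar : ∀ ε ξ, Ubar ε ξ =
      if ξ ≤ SL - ε then UL
      else if ξ < SL then UL + ((ξ - (SL - ε)) / ε) • (Us - UL)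
      else if ξ ≤ SR then Us
      else if ξ < SR + ε then Us + ((ξ - SR) / ε) • (UR - Us)
      else UR)
    (Dminus Dplus : ℝ → (Fin M → ℝ))
    (hDm : ∀ ε, Dminus ε =
      ∫ ξ in (SL - ε)..(0:ℝ), -(Ubar ε ξ - deriv (fun s => s • Ubar ε s) ξ))
    (hDp : ∀ ε, Dplus ε =
      ∫ ξ in (0:ℝ)..(SR + ε), -(Ubar ε ξ - deriv (fun s => s • Ubar ε s) ξ)) :
    Filter.Tendsto Dminus (nhdsWithin 0 (Set.Ioi 0)) (nhds (SL • (Us - UL))) ∧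
      Filter.Tendsto Dplus (nhdsWithin 0 (Set.Ioi 0)) (nhds (SR • (UR - Us))) := by
  have key_m : ∀ ε : ℝ, 0 < ε → Dminus ε = (SL - ε / 2) • (Us - UL) := by
    intro ε hε
    set F : ℝ → Fin M → ℝ := fun ξ => -(Ubar ε ξ - deriv (fun s => s • Ubar ε s) ξ) with hF
    have haSL : SL - ε < SL := by linarith
    have hramp : ∀ s ∈ Set.Ioo (SL - ε) SL, Ubar ε s = UL + ((s - (SL - ε)) / ε) • (Us - UL) := by
      intro s hs
      rw [hUbar, if_neg (by linarith [hs.1]), if_pos hs.2]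
    have hconst : ∀ s ∈ Set.Ioo SL (0:ℝ), Ubar ε s = Us := by
      intro s hs
      rw [hUbar, if_neg (by linarith [hs.1]), if_neg (by linarith [hs.1]),
        if_pos (by linarith [hs.2])]
    have h1 := ramp_integrand (Ubar ε) UL (Us - UL) (SL - ε) SL (SL - ε) ε hramp
    have h2 := const_integrand (Ubar ε) Us SL 0 hconst
    have hint1 : IntervalIntegrable F MeasureTheory.volume (SL - ε) SL :=
      intervalIntegrable_of_Ioo haSL.le
        (((continuous_id.div_const ε).smul continuous_const).intervalIntegrable _ _) h1
    have hint2 : IntervalIntegrable F MeasureTheory.volume SL 0 :=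
      intervalIntegrable_of_Ioo hSL.le
        (intervalIntegrable_const (c := (0 : Fin M → ℝ))) h2
    have I1 : (∫ ξ in (SL - ε)..SL, F ξ) = ((SL ^ 2 - (SL - ε) ^ 2) / 2 / ε) • (Us - UL) := by
      rw [integral_congr_Ioo haSL.le h1, ramp_int_val]
    have I2 : (∫ ξ in SL..(0:ℝ), F ξ) = 0 := by
      rw [integral_congr_Ioo hSL.le h2]
      simp
    have hsplit := intervalIntegral.integral_add_adjacent_intervals hint1 hint2
    rw [hDm ε, ← hF, ← hsplit, I1, I2, add_zero]
    congr 1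
    field_simp
    ring
  have key_p : ∀ ε : ℝ, 0 < ε → Dplus ε = (SR + ε / 2) • (UR - Us) := by
    intro ε hε
    set F : ℝ → Fin M → ℝ := fun ξ => -(Ubar ε ξ - deriv (fun s => s • Ubar ε s) ξ) with hF
    have hbb : SR < SR + ε := by linarith
    have hconst : ∀ s ∈ Set.Ioo (0:ℝ) SR, Ubar ε s = Us := by
      intro s hs
      rw [hUbar, if_neg (by linarith [hs.1]), if_neg (by linarith [hs.1]),
        if_pos hs.2.le]
    have hramp : ∀ s ∈ Set.Ioo SR (SR + ε), Ubar ε s = Us + ((s - SR) / ε) • (UR - Us) := by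
      intro s hs
      rw [hUbar, if_neg (by linarith [hs.1]), if_neg (by linarith [hs.1]),
        if_neg (by linarith [hs.1]), if_pos hs.2]
    have h1 := const_integrand (Ubar ε) Us 0 SR hconst
    have h2 := ramp_integrand (Ubar ε) Us (UR - Us) SR (SR + ε) SR ε hramp
    have hint1 : IntervalIntegrable F MeasureTheory.volume 0 SR :=
      intervalIntegrable_of_Ioo hSR.le
        (intervalIntegrable_const (c := (0 : Fin M → ℝ))) h1
    have hint2 : IntervalIntegrable F MeasureTheory.volume SR (SR + ε) :=
      intervalIntegrable_of_Ioo hbb.le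
        (((continuous_id.div_const ε).smul continuous_const).intervalIntegrable _ _) h2
    have I1 : (∫ ξ in (0:ℝ)..SR, F ξ) = 0 := by
      rw [integral_congr_Ioo hSR.le h1]
      simp
    have I2 : (∫ ξ in SR..(SR + ε), F ξ)
        = (((SR + ε) ^ 2 - SR ^ 2) / 2 / ε) • (UR - Us) := by
      rw [integral_congr_Ioo hbb.le h2, ramp_int_val]
    have hsplit := intervalIntegral.integral_add_adjacent_intervals hint1 hint2
    rw [hDp ε, ← hF, ← hsplit, I1, I2, zero_add]
    congr 1
    field_simp
    ring
  constructor
  · have hc : Filter.Tendsto (fun ε : ℝ => (SL - ε / 2) • (Us - UL))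
        (nhdsWithin 0 (Set.Ioi 0)) (nhds (SL • (Us - UL))) := by
      have hcont : Continuous fun ε : ℝ => (SL - ε / 2) • (Us - UL) :=
        ((continuous_const.sub (continuous_id.div_const 2)).smul continuous_const)
      have h0 : Filter.Tendsto (fun ε : ℝ => (SL - ε / 2) • (Us - UL))
          (nhds 0) (nhds (SL • (Us - UL))) := by
        simpa using hcont.tendsto 0
      exact h0.mono_left nhdsWithin_le_nhds
    refine hc.congr' ?_
    filter_upwards [self_mem_nhdsWithin] with ε hε
    exact (key_m ε hε).symm
  · have hc : Filter.Tendsto (fun ε : ℝ => (SR + ε / 2) • (UR - Us))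
        (nhdsWithin 0 (Set.Ioi 0)) (nhds (SR • (UR - Us))) := by
      have hcont : Continuous fun ε : ℝ => (SR + ε / 2) • (UR - Us) :=
        ((continuous_const.add (continuous_id.div_const 2)).smul continuous_const)
      have h0 : Filter.Tendsto (fun ε : ℝ => (SR + ε / 2) • (UR - Us))
          (nhds 0) (nhds (SR • (UR - Us))) := by
        simpa using hcont.tendsto 0
      exact h0.mono_left nhdsWithin_le_nhds
    refine hc.congr' ?_
    filter_upwards [self_mem_nhdsWithin] with ε hε
    exact (key_p ε hε).symm
end
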